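/- Let G be a group with a finite generating multiset S, and let H ≤ G be a subgroup of finite index with [G:H] ≥ |S|. If the quotient H / core_G(H) is a cyclic group, then S is Nielsen equivalent to a multiset contained in a left-right transversal of H in G. -/

import Mathlib

open scoped Classical

section Defs

variable {G : Type*} [Group G]

/-- A single Nielsen move on a finite multiset of group elements: replace one
occurrence of `g` by `g⁻¹`, or by `h * g` or `g * h` where `h` is another
occurrence in the multiset. -/
def NielsenMove (S T : Multiset G) : Prop :=
  (∃ g ∈ S, T = g⁻¹ ::ₘ S.erase g) ∨
    (∃ g ∈ S, ∃ h ∈ S.erase g, T = h * g ::ₘ S.erase g ∨ T = g * h ::ₘ S.erase g)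

/-- Nielsen equivalence: one multiset is obtained from the other by a finite
sequence of Nielsen moves. -/
def NielsenEquiv (S T : Multiset G) : Prop :=
  Relation.ReflTransGen NielsenMove S T

/-- The elements of the multiset `S` lie in pairwise distinct left cosets of `H`. -/
def LeftDistinct (H : Subgroup G) (S : Multiset G) : Prop :=
  (S.map fun x => ((x : G) : G ⧸ H)).Nodup

/-- The elements of the multiset `S` lie in pairwise distinct right cosets of `H`
(using that `Hx = Hy ↔ x⁻¹H = y⁻¹H`). -/
def RightDistinct (H : Subgroup G) (S : Multiset G) : Prop :=
  (S.map fun x => ((x⁻¹ : G) : G ⧸ H)).Nodup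

/-- `T` is a left transversal of `H`: it contains exactly one element of each
left coset of `H`. -/
def IsLeftTransversal (H : Subgroup G) (T : Set G) : Prop :=
  ∀ g : G, ∃! t, t ∈ T ∧ ((t : G) : G ⧸ H) = ((g : G) : G ⧸ H)

/-- `T` is a right transversal of `H`: it contains exactly one element of each
right coset of `H` (using that `Hx = Hy ↔ x⁻¹H = y⁻¹H`). -/
def IsRightTransversal (H : Subgroup G) (T : Set G) : Prop :=
  ∀ g : G, ∃! t, t ∈ T ∧ ((t⁻¹ : G) : G ⧸ H) = ((g⁻¹ : G) : G ⧸ H)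

/-- The left coset `aH` as a set. -/
def lcoset (a : G) (H : Subgroup G) : Set G := {x | a⁻¹ * x ∈ H}

/-- The right coset `Ha` as a set. -/
def rcoset (H : Subgroup G) (a : G) : Set G := {x | x * a⁻¹ ∈ H}

/-- The double coset `HgH` as a set. -/
def dcoset (H : Subgroup G) (g : G) : Set G := {x | ∃ h₁ ∈ H, ∃ h₂ ∈ H, x = h₁ * g * h₂}

/-- `S` is left-right clean relative to `H`: `S ∖ H` is nonempty and its elements
lie in pairwise distinct left cosets and pairwise distinct right cosets of `H`. -/
def LeftRightClean (H : Subgroup G) (S : Multiset G) : Prop :=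
  (∃ x ∈ S, x ∉ H) ∧
    LeftDistinct H (S.filter fun x => x ∉ H) ∧
    RightDistinct H (S.filter fun x => x ∉ H)

end Defs

set_option linter.unusedSectionVars false
set_option maxHeartbeats 1600000

namespace St11

variable {G : Type*} [Group G]

lemma erase_cons_of_mem {a b : G} {s : Multiset G} (h : b ∈ s) :
    (a ::ₘ s).erase b = a ::ₘ s.erase b := by
  by_cases hab : b = a
  · subst hab; rw [Multiset.erase_cons_head, Multiset.cons_erase h]
  · rw [Multiset.erase_cons_tail _ (fun h' => hab h'.symm)]

lemma NielsenEquiv.refl (S : Multiset G) : NielsenEquiv S S := Relation.ReflTransGen.refl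
lemma NielsenEquiv.trans {S T U : Multiset G} (h1 : NielsenEquiv S T) (h2 : NielsenEquiv T U) :
    NielsenEquiv S U := Relation.ReflTransGen.trans h1 h2
lemma NielsenMove.equiv {S T : Multiset G} (h : NielsenMove S T) : NielsenEquiv S T :=
  Relation.ReflTransGen.single h

/-- invert head -/
lemma ne_inv (a : G) (U : Multiset G) : NielsenEquiv (a ::ₘ U) (a⁻¹ ::ₘ U) := by
  refine NielsenMove.equiv (Or.inl ⟨a, Multiset.mem_cons_self a U, ?_⟩)
  rw [Multiset.erase_cons_head]

/-- a ↦ a * b -/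
lemma ne_mulr (a b : G) (U : Multiset G) :
    NielsenEquiv (a ::ₘ b ::ₘ U) (a * b ::ₘ b ::ₘ U) := by
  refine NielsenMove.equiv (Or.inr ⟨a, Multiset.mem_cons_self _ _, b, ?_, Or.inr ?_⟩) <;>
    rw [Multiset.erase_cons_head]
  exact Multiset.mem_cons_self b U

/-- a ↦ b * a -/
lemma ne_mull (a b : G) (U : Multiset G) :
    NielsenEquiv (a ::ₘ b ::ₘ U) (b * a ::ₘ b ::ₘ U) := by
  refine NielsenMove.equiv (Or.inr ⟨a, Multiset.mem_cons_self _ _, b, ?_, Or.inl ?_⟩) <;>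
    rw [Multiset.erase_cons_head]
  exact Multiset.mem_cons_self b U

/-- a ↦ a * b⁻¹ -/
lemma ne_mulr_inv (a b : G) (U : Multiset G) :
    NielsenEquiv (a ::ₘ b ::ₘ U) (a * b⁻¹ ::ₘ b ::ₘ U) := by
  have h1 : NielsenEquiv (a ::ₘ b ::ₘ U) (a ::ₘ b⁻¹ ::ₘ U) := by
    rw [Multiset.cons_swap a b U, Multiset.cons_swap a b⁻¹ U]; exact ne_inv b (a ::ₘ U)
  have h2 := ne_mulr a b⁻¹ U
  have h3 : NielsenEquiv (a * b⁻¹ ::ₘ b⁻¹ ::ₘ U) (a * b⁻¹ ::ₘ b ::ₘ U) := by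
    rw [Multiset.cons_swap, Multiset.cons_swap (a*b⁻¹) b U]
    simpa using ne_inv b⁻¹ (a * b⁻¹ ::ₘ U)
  exact (h1.trans h2).trans h3

/-- a ↦ b⁻¹ * a -/
lemma ne_mull_inv (a b : G) (U : Multiset G) :
    NielsenEquiv (a ::ₘ b ::ₘ U) (b⁻¹ * a ::ₘ b ::ₘ U) := by
  have h1 : NielsenEquiv (a ::ₘ b ::ₘ U) (a ::ₘ b⁻¹ ::ₘ U) := by
    rw [Multiset.cons_swap a b U, Multiset.cons_swap a b⁻¹ U]; exact ne_inv b (a ::ₘ U)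
  have h2 := ne_mull a b⁻¹ U
  have h3 : NielsenEquiv (b⁻¹ * a ::ₘ b⁻¹ ::ₘ U) (b⁻¹ * a ::ₘ b ::ₘ U) := by
    rw [Multiset.cons_swap, Multiset.cons_swap (b⁻¹*a) b U]
    simpa using ne_inv b⁻¹ (b⁻¹ * a ::ₘ U)
  exact (h1.trans h2).trans h3

lemma nmove_symm {S T : Multiset G} (h : NielsenMove S T) : NielsenEquiv T S := by
  rcases h with ⟨g, hg, rfl⟩ | ⟨g, hg, h, hh, rfl | rfl⟩
  · have := ne_inv g⁻¹ (S.erase g)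
    rw [inv_inv, Multiset.cons_erase hg] at this; exact this
  · -- T = h * g ::ₘ E, recover S = g ::ₘ E
    set E := S.erase g with hE
    have h1 : NielsenEquiv (h * g ::ₘ E) (h⁻¹ * (h * g) ::ₘ E) := by
      have : NielsenEquiv ((h*g) ::ₘ h ::ₘ E.erase h) (h⁻¹ * (h*g) ::ₘ h ::ₘ E.erase h) :=
        ne_mull_inv (h*g) h (E.erase h)
      rwa [Multiset.cons_erase hh] at this
    rw [inv_mul_cancel_left] at h1
    rw [← Multiset.cons_erase hg]
    exact h1
  · set E := S.erase g with hE
    have h1 : NielsenEquiv (g * h ::ₘ E) ((g * h) * h⁻¹ ::ₘ E) := by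
      have : NielsenEquiv ((g*h) ::ₘ h ::ₘ E.erase h) ((g*h) * h⁻¹ ::ₘ h ::ₘ E.erase h) :=
        ne_mulr_inv (g*h) h (E.erase h)
      rwa [Multiset.cons_erase hh] at this
    rw [mul_inv_cancel_right] at h1
    rw [← Multiset.cons_erase hg]
    exact h1


variable {G : Type*} [Group G]

lemma nequiv_symm {S T : Multiset G} (h : NielsenEquiv S T) : NielsenEquiv T S := by
  induction h with
  | refl => exact NielsenEquiv.refl _
  | tail _ hmv ih => exact (nmove_symm hmv).trans ih

lemma nmove_card {S T : Multiset G} (h : NielsenMove S T) : T.card = S.card := by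
  rcases h with ⟨g, hg, rfl⟩ | ⟨g, hg, h, hh, rfl | rfl⟩ <;>
    rw [Multiset.card_cons, ← Multiset.card_cons _ (S.erase g), Multiset.cons_erase hg]

lemma nequiv_card {S T : Multiset G} (h : NielsenEquiv S T) : T.card = S.card := by
  induction h with
  | refl => rfl
  | tail _ hmv ih => rw [nmove_card hmv, ih]

lemma mem_cases {x g : G} {S : Multiset G} (hx : x ∈ S) :
    g = x ∨ x ∈ S.erase g := by
  by_cases h : x = g
  · exact Or.inl h.symm
  · exact Or.inr ((Multiset.mem_erase_of_ne h).2 hx)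

lemma closure_cons (a : G) (U : Multiset G) :
    Subgroup.closure {x : G | x ∈ a ::ₘ U} = Subgroup.closure (insert a {x : G | x ∈ U}) := by
  congr 1; ext x; simp

lemma nmove_closure {S T : Multiset G} (h : NielsenMove S T) :
    Subgroup.closure {x : G | x ∈ S} = Subgroup.closure {x : G | x ∈ T} := by
  have hsub : ∀ {A B : Multiset G}, (∀ x ∈ A, x ∈ Subgroup.closure {y : G | y ∈ B}) →
      Subgroup.closure {x : G | x ∈ A} ≤ Subgroup.closure {y : G | y ∈ B} := by
    intro A B hAB
    exact (Subgroup.closure_le _).2 (fun x hx => hAB x hx)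
  have hmem : ∀ {B : Multiset G} (x : G), x ∈ B → x ∈ Subgroup.closure {y : G | y ∈ B} :=
    fun x hx => Subgroup.subset_closure hx
  rcases h with ⟨g, hg, rfl⟩ | ⟨g, hg, h, hh, rfl | rfl⟩
  · apply le_antisymm <;> apply hsub <;> intro x hx
    · rcases mem_cases (g := g) hx with rfl | hx'
      · have : g⁻¹ ∈ Subgroup.closure {y : G | y ∈ g⁻¹ ::ₘ S.erase g} :=
          hmem _ (Multiset.mem_cons_self _ _)
        simpa using inv_mem this
      · exact hmem _ (Multiset.mem_cons_of_mem hx')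
    · rcases Multiset.mem_cons.1 hx with rfl | hx'
      · exact inv_mem (hmem _ hg)
      · exact hmem _ (Multiset.mem_of_mem_erase hx')
  · apply le_antisymm <;> apply hsub <;> intro x hx
    · rcases mem_cases (g := g) hx with rfl | hx'
      · have h1 : h * g ∈ Subgroup.closure {y : G | y ∈ h * g ::ₘ S.erase g} :=
          hmem _ (Multiset.mem_cons_self _ _)
        have h2 : h ∈ Subgroup.closure {y : G | y ∈ h * g ::ₘ S.erase g} :=
          hmem _ (Multiset.mem_cons_of_mem hh)
        simpa using mul_mem (inv_mem h2) h1
      · exact hmem _ (Multiset.mem_cons_of_mem hx')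
    · rcases Multiset.mem_cons.1 hx with rfl | hx'
      · exact mul_mem (hmem _ (Multiset.mem_of_mem_erase hh)) (hmem _ hg)
      · exact hmem _ (Multiset.mem_of_mem_erase hx')
  · apply le_antisymm <;> apply hsub <;> intro x hx
    · rcases mem_cases (g := g) hx with rfl | hx'
      · have h1 : g * h ∈ Subgroup.closure {y : G | y ∈ g * h ::ₘ S.erase g} :=
          hmem _ (Multiset.mem_cons_self _ _)
        have h2 : h ∈ Subgroup.closure {y : G | y ∈ g * h ::ₘ S.erase g} :=
          hmem _ (Multiset.mem_cons_of_mem hh)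
        simpa using mul_mem h1 (inv_mem h2)
      · exact hmem _ (Multiset.mem_cons_of_mem hx')
    · rcases Multiset.mem_cons.1 hx with rfl | hx'
      · exact mul_mem (hmem _ hg) (hmem _ (Multiset.mem_of_mem_erase hh))
      · exact hmem _ (Multiset.mem_of_mem_erase hx')

lemma nequiv_closure {S T : Multiset G} (h : NielsenEquiv S T) :
    Subgroup.closure {x : G | x ∈ S} = Subgroup.closure {x : G | x ∈ T} := by
  induction h with
  | refl => rfl
  | tail _ hmv ih => rw [ih, nmove_closure hmv]

/-- parking reachability: the head slot can be left-multiplied by anything in the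
closure of the rest. -/
lemma ne_reach (U : Multiset G) {p : G} (hp : p ∈ Subgroup.closure {x : G | x ∈ U}) :
    ∀ e : G, NielsenEquiv (e ::ₘ U) (p * e ::ₘ U) := by
  induction hp using Subgroup.closure_induction with
  | mem u hu =>
    intro e
    refine NielsenMove.equiv (Or.inr ⟨e, Multiset.mem_cons_self _ _, u, ?_, Or.inl ?_⟩) <;>
      rw [Multiset.erase_cons_head]
    exact hu
  | one => intro e; rw [one_mul]; exact NielsenEquiv.refl _
  | mul p q hpc hqc hp hq =>
    intro e
    have := (hq e).trans (hp (q * e))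
    rwa [← mul_assoc] at this
  | inv p hpc hp =>
    intro e
    have := nequiv_symm (hp (p⁻¹ * e))
    rwa [mul_inv_cancel_left] at this


variable {G : Type*} [Group G]

variable (H : Subgroup G)

/-- left coset label of `x` -/
abbrev Lf (x : G) : G ⧸ H := (x : G ⧸ H)
/-- right coset label of `x`, encoded as the left coset of `x⁻¹` -/
abbrev Rf (x : G) : G ⧸ H := ((x⁻¹ : G) : G ⧸ H)

/-- the type of double-coset labels -/
abbrev DC := Quotient (MulAction.orbitRel H (G ⧸ H))

/-- double coset label of a left coset -/
def dL (l : G ⧸ H) : DC H := Quotient.mk'' l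

/-- double coset label of an (encoded) right coset -/
def dR (r : G ⧸ H) : DC H :=
  Quotient.liftOn' r (fun x => dL H ((x⁻¹ : G) : G ⧸ H)) (by
    intro a b hab
    rw [QuotientGroup.leftRel_apply] at hab
    apply Quotient.sound'
    rw [MulAction.orbitRel_apply, MulAction.mem_orbit_iff]
    refine ⟨⟨(a⁻¹ * b), hab⟩, ?_⟩
    show (((a⁻¹ * b) * b⁻¹ : G) : G ⧸ H) = ((a⁻¹ : G) : G ⧸ H)
    rw [mul_inv_cancel_right])

lemma dL_eq_iff (x y : G) :
    dL H (x : G ⧸ H) = dL H (y : G ⧸ H) ↔ ∃ h₁ ∈ H, ∃ h₂ ∈ H, y = h₁ * x * h₂ := by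
  rw [dL, dL, Quotient.eq'', MulAction.orbitRel_apply, MulAction.mem_orbit_iff]
  constructor
  · rintro ⟨⟨h, hh⟩, he⟩
    -- h • [y] = [x]
    have : ((h * y : G) : G ⧸ H) = (x : G ⧸ H) := he
    rw [QuotientGroup.eq] at this
    exact ⟨h⁻¹, inv_mem hh, ((h*y)⁻¹ * x)⁻¹, inv_mem this, by group⟩
  · rintro ⟨h₁, hh₁, h₂, hh₂, rfl⟩
    refine ⟨⟨h₁⁻¹, inv_mem hh₁⟩, ?_⟩
    show ((h₁⁻¹ * (h₁ * x * h₂) : G) : G ⧸ H) = (x : G ⧸ H)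
    rw [QuotientGroup.eq]
    have he : (h₁⁻¹ * (h₁ * x * h₂))⁻¹ * x = h₂⁻¹ := by group
    rw [he]
    exact inv_mem hh₂

lemma dR_mk (x : G) : dR H (x : G ⧸ H) = dL H ((x⁻¹ : G) : G ⧸ H) := rfl

lemma pair_label (x : G) : dL H (Lf H x) = dR H (Rf H x) := by
  rw [Rf, dR_mk, inv_inv]

lemma dL_inv_iff (x y : G) :
    dL H (x : G ⧸ H) = dL H (y : G ⧸ H) ↔
      dL H ((x⁻¹ : G) : G ⧸ H) = dL H ((y⁻¹ : G) : G ⧸ H) := by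
  rw [dL_eq_iff, dL_eq_iff]
  constructor
  · rintro ⟨h₁, hh₁, h₂, hh₂, rfl⟩
    exact ⟨h₂⁻¹, inv_mem hh₂, h₁⁻¹, inv_mem hh₁, by group⟩
  · rintro ⟨h₁, hh₁, h₂, hh₂, he⟩
    refine ⟨h₂⁻¹, inv_mem hh₂, h₁⁻¹, inv_mem hh₁, ?_⟩
    have : y = (y⁻¹)⁻¹ := by group
    rw [this, he]; group

lemma compat_exists {l r : G ⧸ H} (h : dL H l = dR H r) :
    ∃ z : G, Lf H z = l ∧ Rf H z = r := by
  induction l using QuotientGroup.induction_on with | _ a =>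
  induction r using QuotientGroup.induction_on with | _ b =>
  rw [dR_mk, dL_eq_iff] at h
  obtain ⟨h₁, hh₁, h₂, hh₂, he⟩ := h
  refine ⟨a * h₂, ?_, ?_⟩
  · show ((a * h₂ : G) : G ⧸ H) = ((a : G) : G ⧸ H)
    rw [QuotientGroup.eq]; simpa using hh₂
  · show (((a * h₂)⁻¹ : G) : G ⧸ H) = ((b : G) : G ⧸ H)
    rw [QuotientGroup.eq]
    have hb : b = (h₁ * a * h₂)⁻¹ := by rw [← he, inv_inv]
    rw [hb]
    have hg : ((a * h₂)⁻¹)⁻¹ * (h₁ * a * h₂)⁻¹ = h₁⁻¹ := by group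
    rw [hg]; exact inv_mem hh₁

lemma stab_eq (x : G) :
    MulAction.stabilizer H ((x : G ⧸ H)) =
      ((H.comap (MulAut.conj x⁻¹).toMonoidHom).subgroupOf H) := by
  ext h
  rw [MulAction.mem_stabilizer_iff, Subgroup.mem_subgroupOf, Subgroup.mem_comap]
  have : (h : H) • ((x : G) : G ⧸ H) = (((h : G) * x : G) : G ⧸ H) := rfl
  rw [this, QuotientGroup.eq]
  constructor
  · intro hm
    have := inv_mem hm
    simpa [MulAut.conj, mul_assoc] using this
  · intro hm
    have : x⁻¹ * (h:G) * x ∈ H := by simpa [MulAut.conj, mul_assoc] using hm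
    have := inv_mem this
    simpa [mul_assoc] using this

lemma conj_relIndex_eq (x : G) [H.FiniteIndex] :
    (H.comap (MulAut.conj x⁻¹).toMonoidHom).relIndex H =
      (H.comap (MulAut.conj x).toMonoidHom).relIndex H := by
  set C1 := H.comap (MulAut.conj x⁻¹).toMonoidHom with hC1
  set C2 := H.comap (MulAut.conj x).toMonoidHom with hC2
  have hcomp : (MulAut.conj x⁻¹).toMonoidHom.comp (MulAut.conj x).toMonoidHom
      = MonoidHom.id G := by
    ext g; simp [MulAut.conj]; group
  have h1 : (C1 ⊓ H).comap (MulAut.conj x).toMonoidHom = H ⊓ C2 := by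
    rw [Subgroup.comap_inf]
    congr 1
    rw [hC1, Subgroup.comap_comap, hcomp, Subgroup.comap_id]
  have hsurj : Function.Surjective ⇑(MulAut.conj x).toMonoidHom :=
    (MulAut.conj x).surjective
  have h2 : (H ⊓ C2).index = (C1 ⊓ H).index := by
    rw [← h1]; exact Subgroup.index_comap_of_surjective _ hsurj
  have h3 : (C1 ⊓ H).relIndex H * H.index = (C1 ⊓ H).index :=
    Subgroup.relIndex_mul_index inf_le_right
  have h4 : (C2 ⊓ H).relIndex H * H.index = (C2 ⊓ H).index :=
    Subgroup.relIndex_mul_index inf_le_right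
  have h5 : (C2 ⊓ H) = (H ⊓ C2) := inf_comm C2 H
  have hne : H.index ≠ 0 := Subgroup.FiniteIndex.index_ne_zero
  have : (C1 ⊓ H).relIndex H = (C2 ⊓ H).relIndex H := by
    apply Nat.eq_of_mul_eq_mul_right (Nat.pos_of_ne_zero hne)
    rw [h3, h4, h5, h2]
  rw [← Subgroup.inf_relIndex_right C1 H, ← Subgroup.inf_relIndex_right C2 H, this]

lemma orbit_card_eq (x : G) [H.FiniteIndex] :
    Nat.card (MulAction.orbit H ((x : G ⧸ H))) =
      Nat.card (MulAction.orbit H (((x⁻¹ : G) : G ⧸ H))) := by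
  rw [Nat.card_congr (MulAction.orbitEquivQuotientStabilizer H ((x : G ⧸ H))),
    Nat.card_congr (MulAction.orbitEquivQuotientStabilizer H (((x⁻¹ : G) : G ⧸ H))),
    stab_eq, stab_eq, ← Subgroup.index_eq_card, ← Subgroup.index_eq_card]
  have h1 : ((H.comap (MulAut.conj x⁻¹).toMonoidHom).subgroupOf H).index
      = (H.comap (MulAut.conj x⁻¹).toMonoidHom).relIndex H := rfl
  have h2 : ((H.comap (MulAut.conj x⁻¹⁻¹).toMonoidHom).subgroupOf H).index
      = (H.comap (MulAut.conj x⁻¹⁻¹).toMonoidHom).relIndex H := rfl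
  rw [h1, h2, inv_inv, conj_relIndex_eq]

lemma fiber_L_iff (x : G) (l : G ⧸ H) :
    dL H l = dL H (x : G ⧸ H) ↔ l ∈ MulAction.orbit H ((x : G ⧸ H)) := by
  rw [dL, dL, Quotient.eq'', MulAction.orbitRel_apply]

lemma fiber_R_iff (x : G) (r : G ⧸ H) :
    dR H r = dL H (x : G ⧸ H) ↔ dL H r = dL H ((x⁻¹ : G) : G ⧸ H) := by
  induction r using QuotientGroup.induction_on with | _ b =>
  rw [dR_mk]
  constructor
  · intro hh
    have := (dL_inv_iff H b⁻¹ x).1 hh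
    rwa [inv_inv] at this
  · intro hh
    have := (dL_inv_iff H b x⁻¹).1 hh
    rwa [inv_inv] at this

lemma card_LR (d : DC H) [H.FiniteIndex] :
    Nat.card {l : G ⧸ H // dL H l = d} = Nat.card {r : G ⧸ H // dR H r = d} := by
  induction d using Quotient.inductionOn' with | _ l₀ =>
  induction l₀ using QuotientGroup.induction_on with | _ x₀ =>
  have hd : (Quotient.mk'' ((x₀ : G ⧸ H)) : DC H) = dL H (x₀ : G ⧸ H) := rfl
  rw [hd]
  have e1 : Nat.card {l : G ⧸ H // dL H l = dL H (x₀ : G ⧸ H)}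
      = Nat.card (MulAction.orbit H ((x₀ : G ⧸ H))) :=
    Nat.card_congr ((Equiv.subtypeEquivRight (fiber_L_iff H x₀)).trans (Equiv.refl _))
  have e2 : Nat.card {r : G ⧸ H // dR H r = dL H (x₀ : G ⧸ H)}
      = Nat.card {l : G ⧸ H // dL H l = dL H ((x₀⁻¹ : G) : G ⧸ H)} :=
    Nat.card_congr (Equiv.subtypeEquivRight (fiber_R_iff H x₀))
  have e3 : Nat.card {l : G ⧸ H // dL H l = dL H ((x₀⁻¹ : G) : G ⧸ H)}
      = Nat.card (MulAction.orbit H (((x₀⁻¹ : G) : G ⧸ H))) :=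
    Nat.card_congr (Equiv.subtypeEquivRight (fiber_L_iff H x₀⁻¹))
  rw [e1, e2, e3, orbit_card_eq]

lemma card_fiber_eq [H.FiniteIndex] [Fintype (G ⧸ H)] (d : DC H) :
    (Finset.univ.filter (fun l : G ⧸ H => dL H l = d)).card
      = (Finset.univ.filter (fun r : G ⧸ H => dR H r = d)).card := by
  have h1 : Nat.card {l : G ⧸ H // dL H l = d}
      = (Finset.univ.filter (fun l : G ⧸ H => dL H l = d)).card := by
    rw [Nat.card_eq_fintype_card, Fintype.card_subtype]
  have h2 : Nat.card {r : G ⧸ H // dR H r = d}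
      = (Finset.univ.filter (fun r : G ⧸ H => dR H r = d)).card := by
    rw [Nat.card_eq_fintype_card, Fintype.card_subtype]
  rw [← h1, ← h2, card_LR]

/-- If fewer than `[G:H]` elements are "used", there is an element of `G`
whose left and right cosets are both fresh. -/
lemma fresh_exists [H.FiniteIndex] (U : Multiset G) (hU : U.card + 1 ≤ H.index) :
    ∃ z : G, Lf H z ∉ U.map (Lf H) ∧ Rf H z ∉ U.map (Rf H) := by
  classical
  letI : Fintype (G ⧸ H) := Fintype.ofFinite _
  by_contra hcon
  push_neg at hcon
  set usedL : Finset (G ⧸ H) := (U.map (Lf H)).toFinset with husedL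
  set usedR : Finset (G ⧸ H) := (U.map (Rf H)).toFinset with husedR
  have hcon' : ∀ z : G, Lf H z ∈ usedL ∨ Rf H z ∈ usedR := by
    intro z
    by_cases h : Lf H z ∈ usedL
    · exact Or.inl h
    · refine Or.inr ?_
      rw [husedR, Multiset.mem_toFinset]
      refine hcon z ?_
      rw [husedL, Multiset.mem_toFinset] at h
      exact h
  set A : Finset (DC H) :=
    Finset.univ.filter (fun d => ∀ l : G ⧸ H, dL H l = d → l ∈ usedL) with hA
  have claim : ∀ d : DC H, d ∉ A → ∀ r : G ⧸ H, dR H r = d → r ∈ usedR := by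
    intro d hd r hr
    rw [hA, Finset.mem_filter] at hd
    push_neg at hd
    obtain ⟨l₀, hl₀d, hl₀⟩ := hd (Finset.mem_univ d)
    obtain ⟨z, hz1, hz2⟩ := compat_exists H (l := l₀) (r := r) (by rw [hl₀d, hr])
    rcases hcon' z with h | h
    · exact absurd (hz1 ▸ h) hl₀
    · exact hz2 ▸ h
  -- counting
  have hsum1 : Fintype.card (G ⧸ H)
      = ∑ d : DC H, (Finset.univ.filter (fun l : G ⧸ H => dL H l = d)).card := by
    rw [← Finset.card_univ]
    exact Finset.card_eq_sum_card_fiberwise (fun l _ => Finset.mem_univ (dL H l))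
  have hsum2 : ∑ d : DC H, (U.toFinset.filter (fun x : G => dL H (Lf H x) = d)).card
      = U.toFinset.card :=
    (Finset.card_eq_sum_card_fiberwise (fun x _ => Finset.mem_univ (dL H (Lf H x)))).symm
  have hbound : ∀ d : DC H, (Finset.univ.filter (fun l : G ⧸ H => dL H l = d)).card
      ≤ (U.toFinset.filter (fun x : G => dL H (Lf H x) = d)).card := by
    intro d
    by_cases hd : d ∈ A
    · -- all left cosets with label d are used
      have hmem : ∀ l ∈ Finset.univ.filter (fun l : G ⧸ H => dL H l = d),
          ∃ x ∈ U, Lf H x = l := by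
        intro l hl
        rw [Finset.mem_filter] at hl
        rw [hA, Finset.mem_filter] at hd
        have := hd.2 l hl.2
        rw [husedL, Multiset.mem_toFinset, Multiset.mem_map] at this
        exact this
      choose fx hfx1 hfx2 using hmem
      refine Finset.card_le_card_of_injOn
        (fun l => if hl : l ∈ Finset.univ.filter (fun l : G ⧸ H => dL H l = d)
          then fx l hl else 1) ?_ ?_
      · intro l hl
        rw [Finset.mem_coe] at hl ⊢
        simp only [dif_pos hl]; rw [Finset.mem_filter, Multiset.mem_toFinset]
        refine ⟨hfx1 l hl, ?_⟩
        rw [hfx2 l hl]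
        exact (Finset.mem_filter.1 hl).2
      · intro l hl l' hl' he
        rw [Finset.mem_coe] at hl hl'
        simp only [dif_pos hl, dif_pos hl'] at he
        rw [← hfx2 l hl, ← hfx2 l' hl', he]
    · -- all right cosets with label d are used
      rw [card_fiber_eq]
      have hmem : ∀ r ∈ Finset.univ.filter (fun r : G ⧸ H => dR H r = d),
          ∃ x ∈ U, Rf H x = r := by
        intro r hr
        rw [Finset.mem_filter] at hr
        have := claim d hd r hr.2
        rw [husedR, Multiset.mem_toFinset, Multiset.mem_map] at this
        exact this
      choose fx hfx1 hfx2 using hmem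
      refine Finset.card_le_card_of_injOn
        (fun r => if hr : r ∈ Finset.univ.filter (fun r : G ⧸ H => dR H r = d)
          then fx r hr else 1) ?_ ?_
      · intro r hr
        rw [Finset.mem_coe] at hr ⊢
        simp only [dif_pos hr]; rw [Finset.mem_filter, Multiset.mem_toFinset]
        refine ⟨hfx1 r hr, ?_⟩
        have h1 : dR H (Rf H (fx r hr)) = d := by
          rw [hfx2 r hr]; exact (Finset.mem_filter.1 hr).2
        rw [← pair_label] at h1
        exact h1
      · intro r hr r' hr' he
        rw [Finset.mem_coe] at hr hr'
        simp only [dif_pos hr, dif_pos hr'] at he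
        rw [← hfx2 r hr, ← hfx2 r' hr', he]
  have hfinal : H.index ≤ U.toFinset.card := by
    rw [Subgroup.index_eq_card, Nat.card_eq_fintype_card, hsum1, ← hsum2]
    exact Finset.sum_le_sum (fun d _ => hbound d)
  have := Multiset.toFinset_card_le U
  omega

/-- Given a multiset whose elements lie in pairwise distinct left cosets and
pairwise distinct right cosets, produce a system of representatives. -/
lemma transversal_package [H.FiniteIndex] (S' : Multiset G)
    (hL : (S'.map (Lf H)).Nodup) (hR : (S'.map (Rf H)).Nodup) :
    ∃ pk : G ⧸ H → G, (∀ l, Lf H (pk l) = l) ∧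
      Function.Bijective (fun l => Rf H (pk l)) ∧ (∀ x ∈ S', pk (Lf H x) = x) := by
  classical
  letI : Fintype (G ⧸ H) := Fintype.ofFinite _
  set usedL : Finset (G ⧸ H) := (S'.map (Lf H)).toFinset with husedL
  set usedR : Finset (G ⧸ H) := (S'.map (Rf H)).toFinset with husedR
  have husedL_iff : ∀ l, l ∈ usedL ↔ ∃ x, x ∈ S' ∧ Lf H x = l := by
    intro l; rw [husedL, Multiset.mem_toFinset, Multiset.mem_map]
  have husedR_iff : ∀ r, r ∈ usedR ↔ ∃ x, x ∈ S' ∧ Rf H x = r := by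
    intro r; rw [husedR, Multiset.mem_toFinset, Multiset.mem_map]
  set uL : DC H → Finset (G ⧸ H) :=
    fun d => Finset.univ.filter (fun l => dL H l = d ∧ l ∉ usedL) with huL
  set uR : DC H → Finset (G ⧸ H) :=
    fun d => Finset.univ.filter (fun r => dR H r = d ∧ r ∉ usedR) with huR
  -- the count of used lefts with label d equals the count of used rights with label d
  have hused : ∀ d : DC H,
      (Finset.univ.filter (fun l : G ⧸ H => dL H l = d ∧ l ∈ usedL)).card
        = (Finset.univ.filter (fun r : G ⧸ H => dR H r = d ∧ r ∈ usedR)).card := by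
    intro d
    have k1 : (S'.toFinset.filter (fun x : G => dL H (Lf H x) = d)).card
        = (Finset.univ.filter (fun l : G ⧸ H => dL H l = d ∧ l ∈ usedL)).card := by
      refine Finset.card_bij (fun x _ => Lf H x) ?_ ?_ ?_
      · intro x hx
        rw [Finset.mem_filter, Multiset.mem_toFinset] at hx
        rw [Finset.mem_filter]
        exact ⟨Finset.mem_univ _, hx.2, (husedL_iff _).2 ⟨x, hx.1, rfl⟩⟩
      · intro x hx x' hx' he
        rw [Finset.mem_filter, Multiset.mem_toFinset] at hx hx'
        exact Multiset.inj_on_of_nodup_map hL x hx.1 x' hx'.1 he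
      · intro l hl
        rw [Finset.mem_filter] at hl
        obtain ⟨x, hx1, hx2⟩ := (husedL_iff l).1 hl.2.2
        refine ⟨x, ?_, hx2⟩
        rw [Finset.mem_filter, Multiset.mem_toFinset]
        exact ⟨hx1, by rw [hx2]; exact hl.2.1⟩
    have k2 : (S'.toFinset.filter (fun x : G => dL H (Lf H x) = d)).card
        = (Finset.univ.filter (fun r : G ⧸ H => dR H r = d ∧ r ∈ usedR)).card := by
      refine Finset.card_bij (fun x _ => Rf H x) ?_ ?_ ?_
      · intro x hx
        rw [Finset.mem_filter, Multiset.mem_toFinset] at hx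
        rw [Finset.mem_filter]
        refine ⟨Finset.mem_univ _, ?_, (husedR_iff _).2 ⟨x, hx.1, rfl⟩⟩
        rw [← pair_label]; exact hx.2
      · intro x hx x' hx' he
        rw [Finset.mem_filter, Multiset.mem_toFinset] at hx hx'
        exact Multiset.inj_on_of_nodup_map hR x hx.1 x' hx'.1 he
      · intro r hr
        rw [Finset.mem_filter] at hr
        obtain ⟨x, hx1, hx2⟩ := (husedR_iff r).1 hr.2.2
        refine ⟨x, ?_, hx2⟩
        rw [Finset.mem_filter, Multiset.mem_toFinset]
        refine ⟨hx1, ?_⟩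
        rw [pair_label, hx2]
        exact hr.2.1
    rw [← k1, k2]
  have hfib : ∀ d : DC H, (uL d).card = (uR d).card := by
    intro d
    have s1 : (Finset.univ.filter (fun l : G ⧸ H => dL H l = d ∧ l ∈ usedL)).card
        + (uL d).card = (Finset.univ.filter (fun l : G ⧸ H => dL H l = d)).card := by
      simp only [huL]
      have e1 : (Finset.univ.filter (fun l : G ⧸ H => dL H l = d ∧ l ∈ usedL))
          = (Finset.univ.filter (fun l : G ⧸ H => dL H l = d)).filter
            (fun l => l ∈ usedL) := by rw [Finset.filter_filter]
      have e2 : (Finset.univ.filter (fun l : G ⧸ H => dL H l = d ∧ l ∉ usedL))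
          = (Finset.univ.filter (fun l : G ⧸ H => dL H l = d)).filter
            (fun l => ¬ (l ∈ usedL)) := by rw [Finset.filter_filter]
      rw [e1, e2]
      exact Finset.card_filter_add_card_filter_not _
    have s2 : (Finset.univ.filter (fun r : G ⧸ H => dR H r = d ∧ r ∈ usedR)).card
        + (uR d).card = (Finset.univ.filter (fun r : G ⧸ H => dR H r = d)).card := by
      simp only [huR]
      have e1 : (Finset.univ.filter (fun r : G ⧸ H => dR H r = d ∧ r ∈ usedR))
          = (Finset.univ.filter (fun r : G ⧸ H => dR H r = d)).filter
            (fun r => r ∈ usedR) := by rw [Finset.filter_filter]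
      have e2 : (Finset.univ.filter (fun r : G ⧸ H => dR H r = d ∧ r ∉ usedR))
          = (Finset.univ.filter (fun r : G ⧸ H => dR H r = d)).filter
            (fun r => ¬ (r ∈ usedR)) := by rw [Finset.filter_filter]
      rw [e1, e2]
      exact Finset.card_filter_add_card_filter_not _
    have s3 := card_fiber_eq H d
    have s4 := hused d
    omega
  -- per-label matching of unused lefts with unused rights
  set em : (d : DC H) → {x // x ∈ uL d} ≃ {x // x ∈ uR d} :=
    fun d => Finset.equivOfCardEq (hfib d) with hem
  set gd : DC H → G ⧸ H → G ⧸ H := fun d l =>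
    if h : l ∈ uL d then (em d ⟨l, h⟩ : G ⧸ H) else l with hgd
  have hgd_mem : ∀ d l (h : l ∈ uL d), gd d l ∈ uR d := by
    intro d l h
    rw [hgd]; simp only [dif_pos h]
    exact (em d ⟨l, h⟩).2
  have hgd_inj : ∀ d l l', l ∈ uL d → l' ∈ uL d → gd d l = gd d l' → l = l' := by
    intro d l l' h h' he
    rw [hgd] at he; simp only [dif_pos h, dif_pos h'] at he
    have := (em d).injective (Subtype.ext he)
    exact congrArg Subtype.val this
  -- definition of the representative picker
  have hmemuL : ∀ l : G ⧸ H, l ∉ usedL → l ∈ uL (dL H l) := by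
    intro l hl
    rw [huL, Finset.mem_filter]
    exact ⟨Finset.mem_univ _, rfl, hl⟩
  have hcompat : ∀ (l : G ⧸ H) (h : l ∉ usedL),
      dL H l = dR H (gd (dL H l) l) := by
    intro l h
    have := hgd_mem (dL H l) l (hmemuL l h)
    rw [huR, Finset.mem_filter] at this
    exact this.2.1.symm
  set pk : G ⧸ H → G := fun l =>
    if hx : ∃ x, x ∈ S' ∧ Lf H x = l then hx.choose
    else (compat_exists H (hcompat l (fun hl => hx ((husedL_iff l).1 hl)))).choose
    with hpk
  have pk_used : ∀ l (hx : ∃ x, x ∈ S' ∧ Lf H x = l),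
      pk l ∈ S' ∧ Lf H (pk l) = l := by
    intro l hx
    rw [hpk]; simp only [dif_pos hx]
    exact ⟨hx.choose_spec.1, hx.choose_spec.2⟩
  have pk_unused : ∀ l (hx : ¬ ∃ x, x ∈ S' ∧ Lf H x = l),
      Lf H (pk l) = l ∧ Rf H (pk l) = gd (dL H l) l := by
    intro l hx
    rw [hpk]; simp only [dif_neg hx]
    exact (compat_exists H (hcompat l (fun hl => hx ((husedL_iff l).1 hl)))).choose_spec
  have pk_left : ∀ l, Lf H (pk l) = l := by
    intro l
    by_cases hx : ∃ x, x ∈ S' ∧ Lf H x = l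
    · exact (pk_used l hx).2
    · exact (pk_unused l hx).1
  have pk_S' : ∀ x ∈ S', pk (Lf H x) = x := by
    intro x hx
    have hex : ∃ y, y ∈ S' ∧ Lf H y = Lf H x := ⟨x, hx, rfl⟩
    obtain ⟨h1, h2⟩ := pk_used _ hex
    exact Multiset.inj_on_of_nodup_map hL _ h1 x hx h2
  have pk_inj : Function.Injective (fun l => Rf H (pk l)) := by
    intro l l' he
    simp only at he
    by_cases hx : ∃ x, x ∈ S' ∧ Lf H x = l <;>
      by_cases hx' : ∃ x, x ∈ S' ∧ Lf H x = l'
    · obtain ⟨m1, m2⟩ := pk_used l hx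
      obtain ⟨m1', m2'⟩ := pk_used l' hx'
      have := Multiset.inj_on_of_nodup_map hR _ m1 _ m1' he
      rw [← m2, ← m2', this]
    · obtain ⟨m1, m2⟩ := pk_used l hx
      obtain ⟨m1', m2'⟩ := pk_unused l' hx'
      exfalso
      have hu : Rf H (pk l) ∈ usedR := (husedR_iff _).2 ⟨pk l, m1, rfl⟩
      rw [he, m2'] at hu
      have := hgd_mem (dL H l') l' (hmemuL l' (fun hl => hx' ((husedL_iff l').1 hl)))
      rw [huR, Finset.mem_filter] at this
      exact this.2.2 hu
    · obtain ⟨m1, m2⟩ := pk_unused l hx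
      obtain ⟨m1', m2'⟩ := pk_used l' hx'
      exfalso
      have hu : Rf H (pk l') ∈ usedR := (husedR_iff _).2 ⟨pk l', m1', rfl⟩
      rw [← he, m2] at hu
      have := hgd_mem (dL H l) l (hmemuL l (fun hl => hx ((husedL_iff l).1 hl)))
      rw [huR, Finset.mem_filter] at this
      exact this.2.2 hu
    · obtain ⟨m1, m2⟩ := pk_unused l hx
      obtain ⟨m1', m2'⟩ := pk_unused l' hx'
      rw [m2] at he; rw [m2'] at he
      have hd : dL H l = dL H l' := by
        rw [hcompat l (fun hl => hx ((husedL_iff l).1 hl)), he,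
          ← hcompat l' (fun hl => hx' ((husedL_iff l').1 hl))]
      rw [← hd] at he
      refine hgd_inj (dL H l) l l'
        (hmemuL l (fun hl => hx ((husedL_iff l).1 hl))) ?_ he
      rw [hd]
      exact hmemuL l' (fun hl => hx' ((husedL_iff l').1 hl))
  exact ⟨pk, pk_left, Finite.injective_iff_bijective.1 pk_inj, pk_S'⟩

lemma ne_mulr_inv_pow (a b : G) (U : Multiset G) (q : ℕ) :
    NielsenEquiv (a ::ₘ b ::ₘ U) (a * (b⁻¹) ^ q ::ₘ b ::ₘ U) := by
  induction q with
  | zero => simpa using NielsenEquiv.refl (a ::ₘ b ::ₘ U)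
  | succ q ih =>
    refine ih.trans ?_
    have := ne_mulr_inv (a * (b⁻¹) ^ q) b U
    rwa [mul_assoc, ← pow_succ] at this

lemma subgroupOf_core_finiteIndex [H.FiniteIndex] :
    (H.normalCore.subgroupOf H).FiniteIndex := by
  constructor
  have h := Subgroup.relIndex_mul_index (Subgroup.normalCore_le H)
  have h2 : H.normalCore.index ≠ 0 := Subgroup.FiniteIndex.index_ne_zero
  intro hc
  rw [show (H.normalCore.subgroupOf H).index = H.normalCore.relIndex H from rfl] at hc
  rw [hc, zero_mul] at h
  exact h2 h.symm

lemma euclid [H.FiniteIndex] :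
    ∀ (j : ℕ) (c : ↥H ⧸ (H.normalCore.subgroupOf H)) (i : ℕ) (a b : G)
      (ha : a ∈ H) (hb : b ∈ H),
      ((⟨a, ha⟩ : ↥H) : ↥H ⧸ (H.normalCore.subgroupOf H)) = c ^ i →
      ((⟨b, hb⟩ : ↥H) : ↥H ⧸ (H.normalCore.subgroupOf H)) = c ^ j →
      ∀ U : Multiset G, ∃ a' b' : G,
        NielsenEquiv (a ::ₘ b ::ₘ U) (a' ::ₘ b' ::ₘ U) ∧ a' ∈ H ∧ b' ∈ H.normalCore ∧
        a ∈ Subgroup.closure {a', b'} ∧ b ∈ Subgroup.closure {a', b'} := by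
  intro j
  induction j using Nat.strong_induction_on with
  | _ j IH =>
  intro c i a b ha hb hca hcb U
  rcases Nat.eq_zero_or_pos j with rfl | hj
  · refine ⟨a, b, NielsenEquiv.refl _, ha, ?_, ?_, ?_⟩
    · have h1 : ((⟨b, hb⟩ : ↥H) : ↥H ⧸ (H.normalCore.subgroupOf H)) = 1 := by
        rw [hcb, pow_zero]
      rw [QuotientGroup.eq_one_iff] at h1
      rwa [Subgroup.mem_subgroupOf] at h1
    · exact Subgroup.subset_closure (Set.mem_insert _ _)
    · exact Subgroup.subset_closure (Set.mem_insert_of_mem _ rfl)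
  · set q := i / j with hq
    set r := i % j with hr
    have hij : j * q + r = i := Nat.div_add_mod i j
    have hrj : r < j := Nat.mod_lt _ hj
    set a₂ := a * (b⁻¹) ^ q with ha₂def
    have ha₂ : a₂ ∈ H := mul_mem ha (pow_mem (inv_mem hb) q)
    have hsub : (⟨a₂, ha₂⟩ : ↥H) = ⟨a, ha⟩ * ((⟨b, hb⟩ : ↥H))⁻¹ ^ q := by
      ext
      push_cast
      rfl
    have hclass : ((⟨a₂, ha₂⟩ : ↥H) : ↥H ⧸ (H.normalCore.subgroupOf H)) = c ^ r := by
      rw [hsub]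
      have hmul : ((⟨a, ha⟩ * ((⟨b, hb⟩ : ↥H))⁻¹ ^ q : ↥H) : ↥H ⧸ (H.normalCore.subgroupOf H))
          = ((⟨a, ha⟩ : ↥H) : ↥H ⧸ (H.normalCore.subgroupOf H))
            * (((⟨b, hb⟩ : ↥H) : ↥H ⧸ (H.normalCore.subgroupOf H)))⁻¹ ^ q := by
        push_cast
        rfl
      rw [hmul, hca, hcb]
      have hcomm : Commute ((c ^ j) ^ q) (c ^ r) := ((Commute.refl c).pow_pow j r).pow_left q
      calc c ^ i * ((c ^ j)⁻¹) ^ q = (c ^ j) ^ q * c ^ r * ((c ^ j) ^ q)⁻¹ := by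
            rw [← pow_mul, ← pow_add, hij, inv_pow]
            group
        _ = c ^ r * (c ^ j) ^ q * ((c ^ j) ^ q)⁻¹ := by rw [hcomm.eq]
        _ = c ^ r := by rw [mul_inv_cancel_right]
    obtain ⟨a', b', hNE, ha', hb', hbcl, ha₂cl⟩ :=
      IH r hrj c j b a₂ hb ha₂ hcb hclass U
    refine ⟨a', b', ?_, ha', hb', ?_, hbcl⟩
    · have step1 : NielsenEquiv (a ::ₘ b ::ₘ U) (a₂ ::ₘ b ::ₘ U) := ne_mulr_inv_pow a b U q
      rw [Multiset.cons_swap a₂ b U] at step1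
      exact step1.trans hNE
    · have haeq : a = a₂ * b ^ q := by
        rw [ha₂def, inv_pow, inv_mul_cancel_right]
      rw [haeq]
      exact mul_mem ha₂cl (pow_mem hbcl q)


lemma pair_swap {a b : G} {S : Multiset G} (ha : a ∈ S) (hb : b ∈ S.erase a) :
    a ∈ S.erase b := by
  by_cases h : a = b
  · subst h; exact hb
  · exact (Multiset.mem_erase_of_ne h).2 ha

noncomputable def wgt (H : Subgroup G) (x : G) : ℕ :=
  if x ∉ H then 2 else if x ∉ H.normalCore then 1 else 0

lemma wgt_le_one_of_mem {H : Subgroup G} {x : G} (hx : x ∈ H) : wgt H x ≤ 1 := by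
  rw [wgt, if_neg (by simpa using hx)]
  split <;> omega

lemma wgt_eq_two {H : Subgroup G} {x : G} (hx : x ∉ H) : wgt H x = 2 := if_pos hx

lemma wgt_eq_one {H : Subgroup G} {x : G} (hx : x ∈ H) (hn : x ∉ H.normalCore) :
    wgt H x = 1 := by
  rw [wgt, if_neg (by simpa using hx), if_pos hn]

lemma wgt_eq_zero {H : Subgroup G} {x : G} (hx : x ∈ H.normalCore) : wgt H x = 0 := by
  rw [wgt, if_neg (by simpa using Subgroup.normalCore_le H hx), if_neg (by simpa using hx)]

noncomputable def wsum (H : Subgroup G) (S : Multiset G) : ℕ := (S.map (wgt H)).sum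

lemma wsum_cons (H : Subgroup G) (a : G) (S : Multiset G) :
    wsum H (a ::ₘ S) = wgt H a + wsum H S := by
  rw [wsum, wsum, Multiset.map_cons, Multiset.sum_cons]

def Inv1 (H : Subgroup G) (S : Multiset G) : Prop :=
  ∀ a ∈ S, ∀ b ∈ S.erase a,
    (a ∉ H → b ∉ H → Lf H a ≠ Lf H b ∧ Rf H a ≠ Rf H b) ∧
    ¬(a ∈ H ∧ a ∉ H.normalCore ∧ b ∈ H ∧ b ∉ H.normalCore)

lemma phase1 [H.FiniteIndex] (hcyc : IsCyclic (↥H ⧸ (H.normalCore.subgroupOf H))) (n : ℕ) :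
    ∀ S : Multiset G, wsum H S ≤ n → ∃ S', NielsenEquiv S S' ∧ Inv1 H S' := by
  induction n using Nat.strong_induction_on with
  | _ n IHn =>
  intro S hn
  by_cases h1 : ∃ a ∈ S, ∃ b ∈ (S.erase a),
      a ∉ H ∧ b ∉ H ∧ (Lf H a = Lf H b ∨ Rf H a = Rf H b)
  · obtain ⟨a, ha, b, hb, hna, hnb, hcol⟩ := h1
    set V := (S.erase a).erase b with hV
    have hS : S = a ::ₘ b ::ₘ V := by
      rw [hV, Multiset.cons_erase hb, Multiset.cons_erase ha]
    obtain ⟨cnew, hcH, hNE⟩ : ∃ c : G, c ∈ H ∧ NielsenEquiv S (c ::ₘ a ::ₘ V) := by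
      rcases hcol with hcl | hcr
      · refine ⟨a⁻¹ * b, (QuotientGroup.eq).1 hcl, ?_⟩
        rw [hS, Multiset.cons_swap]
        exact ne_mull_inv b a V
      · refine ⟨b * a⁻¹, ?_, ?_⟩
        · have h3 := (QuotientGroup.eq).1 hcr
          rw [inv_inv] at h3
          have h4 := inv_mem h3
          have h5 : (a * b⁻¹)⁻¹ = b * a⁻¹ := by group
          rwa [h5] at h4
        · rw [hS, Multiset.cons_swap]
          exact ne_mulr_inv b a V
    have hdec : wsum H (cnew ::ₘ a ::ₘ V) < wsum H S := by
      rw [hS, wsum_cons, wsum_cons, wsum_cons, wsum_cons]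
      have k1 := wgt_le_one_of_mem hcH
      have k2 := wgt_eq_two hnb
      omega
    obtain ⟨S', hne', hinv⟩ := IHn (n - 1) (by omega) (cnew ::ₘ a ::ₘ V) (by omega)
    exact ⟨S', hNE.trans hne', hinv⟩
  · by_cases h2 : ∃ a ∈ S, ∃ b ∈ S.erase a,
        (a ∈ H ∧ a ∉ H.normalCore) ∧ (b ∈ H ∧ b ∉ H.normalCore)
    · obtain ⟨a, ha, b, hb, ⟨haH, haN⟩, hbH, hbN⟩ := h2
      set V := (S.erase a).erase b with hV
      have hS : S = a ::ₘ b ::ₘ V := by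
        rw [hV, Multiset.cons_erase hb, Multiset.cons_erase ha]
      haveI := subgroupOf_core_finiteIndex H
      obtain ⟨c, hcgen⟩ := hcyc.exists_generator
      obtain ⟨i, hi⟩ := (Submonoid.mem_powers_iff _ _).1
        ((mem_powers_iff_mem_zpowers).2 (hcgen ((⟨a, haH⟩ : ↥H) : ↥H ⧸ (H.normalCore.subgroupOf H))))
      obtain ⟨j, hj⟩ := (Submonoid.mem_powers_iff _ _).1
        ((mem_powers_iff_mem_zpowers).2 (hcgen ((⟨b, hbH⟩ : ↥H) : ↥H ⧸ (H.normalCore.subgroupOf H))))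
      obtain ⟨a', b', hNE, ha', hb', hacl, hbcl⟩ :=
        euclid H j c i a b haH hbH hi.symm hj.symm V
      have hnew : NielsenEquiv S (a' ::ₘ b' ::ₘ V) := by rw [hS]; exact hNE
      have hdec : wsum H (a' ::ₘ b' ::ₘ V) < wsum H S := by
        rw [hS, wsum_cons, wsum_cons, wsum_cons, wsum_cons]
        have k1 := wgt_le_one_of_mem ha'
        have k2 := wgt_eq_zero hb'
        have k3 := wgt_eq_one haH haN
        have k4 := wgt_eq_one hbH hbN
        omega
      obtain ⟨S', hne', hinv⟩ := IHn (n - 1) (by omega) (a' ::ₘ b' ::ₘ V) (by omega)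
      exact ⟨S', hnew.trans hne', hinv⟩
    · push_neg at h1 h2
      refine ⟨S, NielsenEquiv.refl _, ?_⟩
      intro a ha b hb
      constructor
      · intro hna hnb
        exact h1 a ha b hb hna hnb
      · rintro ⟨k1, k2, k3, k4⟩
        exact k4 (h2 a ha b hb ⟨k1, k2⟩ k3)

lemma nodup_map_of_pairwise {β : Type*} (f : G → β) :
    ∀ (S : Multiset G), (∀ a ∈ S, ∀ b ∈ S.erase a, f a ≠ f b) → (S.map f).Nodup := by
  intro S
  induction S using Multiset.induction_on with
  | empty => intro _; simp
  | cons a S ih =>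
    intro h
    rw [Multiset.map_cons, Multiset.nodup_cons]
    constructor
    · intro hmem
      obtain ⟨b, hbS, hfb⟩ := Multiset.mem_map.1 hmem
      exact (h a (Multiset.mem_cons_self a S) b (by rwa [Multiset.erase_cons_head])) hfb.symm
    · apply ih
      intro x hx y hy
      apply h x (Multiset.mem_cons_of_mem hx) y
      by_cases hxa : x = a
      · subst hxa
        rw [Multiset.erase_cons_head]
        exact Multiset.mem_of_mem_erase hy
      · rw [Multiset.erase_cons_tail _ (fun hh => hxa hh.symm)]
        exact Multiset.mem_cons_of_mem hy

lemma mem_H_iff_Lf (x : G) : Lf H x = Lf H 1 ↔ x ∈ H := by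
  rw [Lf, Lf, QuotientGroup.eq]
  simp

lemma mem_H_iff_Rf (x : G) : Rf H x = Rf H 1 ↔ x ∈ H := by
  rw [Rf, Rf, QuotientGroup.eq]
  simp

lemma phase2 [H.FiniteIndex] (n : ℕ) :
    ∀ S : Multiset G, Subgroup.closure {x : G | x ∈ S} = ⊤ → S.card ≤ H.index →
      Inv1 H S → (S.filter (fun x => x ∈ H.normalCore)).card ≤ n →
      ∃ S', NielsenEquiv S S' ∧ (S'.map (Lf H)).Nodup ∧ (S'.map (Rf H)).Nodup := by
  induction n using Nat.strong_induction_on with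
  | _ n IHn =>
  intro S hgen hcard hinv hfil
  by_cases hH : ∀ a ∈ S, ∀ b ∈ S.erase a, ¬(a ∈ H ∧ b ∈ H)
  · refine ⟨S, NielsenEquiv.refl _, ?_, ?_⟩
    · apply nodup_map_of_pairwise
      intro a ha b hb heq
      by_cases haH : a ∈ H <;> by_cases hbH : b ∈ H
      · exact hH a ha b hb ⟨haH, hbH⟩
      · have h3 : Lf H b = Lf H 1 := by
          rw [← heq, mem_H_iff_Lf]; exact haH
        exact hbH ((mem_H_iff_Lf H b).1 h3)
      · have h3 : Lf H a = Lf H 1 := by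
          rw [heq, mem_H_iff_Lf]; exact hbH
        exact haH ((mem_H_iff_Lf H a).1 h3)
      · exact ((hinv a ha b hb).1 haH hbH).1 heq
    · apply nodup_map_of_pairwise
      intro a ha b hb heq
      by_cases haH : a ∈ H <;> by_cases hbH : b ∈ H
      · exact hH a ha b hb ⟨haH, hbH⟩
      · have h3 : Rf H b = Rf H 1 := by
          rw [← heq, mem_H_iff_Rf]; exact haH
        exact hbH ((mem_H_iff_Rf H b).1 h3)
      · have h3 : Rf H a = Rf H 1 := by
          rw [heq, mem_H_iff_Rf]; exact hbH
        exact haH ((mem_H_iff_Rf H a).1 h3)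
      · exact ((hinv a ha b hb).1 haH hbH).2 heq
  · push_neg at hH
    obtain ⟨a, ha, b, hb, haH, hbH⟩ := hH
    have hnc : a ∈ H.normalCore ∨ b ∈ H.normalCore := by
      by_contra hcon
      push_neg at hcon
      exact (hinv a ha b hb).2 ⟨haH, hcon.1, hbH, hcon.2⟩
    obtain ⟨e, o, he, ho, heN, hoH⟩ :
        ∃ e o : G, e ∈ S ∧ o ∈ S.erase e ∧ e ∈ H.normalCore ∧ o ∈ H := by
      rcases hnc with h | h
      · exact ⟨a, b, ha, hb, h, hbH⟩
      · exact ⟨b, a, Multiset.mem_of_mem_erase hb, pair_swap ha hb, h, haH⟩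
    set V := S.erase e with hV
    have hSV : S = e ::ₘ V := (Multiset.cons_erase he).symm
    have hScard : 1 ≤ S.card := by
      rw [hSV, Multiset.card_cons]; omega
    have hVcard : V.card + 1 ≤ H.index := by
      rw [hV, Multiset.card_erase_of_mem he, Nat.pred_eq_sub_one]
      omega
    obtain ⟨z, hzL, hzR⟩ := fresh_exists H V hVcard
    have hVtop : Subgroup.map (QuotientGroup.mk' H.normalCore)
        (Subgroup.closure {x : G | x ∈ V}) = ⊤ := by
      rw [MonoidHom.map_closure, eq_top_iff]
      have step : (⊤ : Subgroup (G ⧸ H.normalCore))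
          ≤ Subgroup.closure ((QuotientGroup.mk' H.normalCore) '' {x : G | x ∈ S}) := by
        rw [← MonoidHom.map_closure, hgen,
          Subgroup.map_top_of_surjective _ (QuotientGroup.mk'_surjective H.normalCore)]
      refine le_trans step ?_
      rw [Subgroup.closure_le]
      rintro y ⟨x, hx, rfl⟩
      by_cases hxe : x = e
      · subst hxe
        have : (QuotientGroup.mk' H.normalCore) x = 1 := by
          rw [QuotientGroup.mk'_apply, QuotientGroup.eq_one_iff]
          exact heN
        rw [this]
        exact one_mem _
      · exact Subgroup.subset_closure
          (Set.mem_image_of_mem _ (show x ∈ {x : G | x ∈ V} from (Multiset.mem_erase_of_ne hxe).2 hx))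
    have hz' : ((z : G ⧸ H.normalCore)) ∈ Subgroup.map (QuotientGroup.mk' H.normalCore)
        (Subgroup.closure {x : G | x ∈ V}) := by
      rw [hVtop]; trivial
    obtain ⟨p, hp, hpz⟩ := Subgroup.mem_map.1 hz'
    set x' := p * e with hx'def
    have hres : ((x' : G) : G ⧸ H.normalCore) = ((z : G) : G ⧸ H.normalCore) := by
      rw [hx'def]
      have h1 : ((p * e : G) : G ⧸ H.normalCore) = ((p : G) : G ⧸ H.normalCore)
          * ((e : G) : G ⧸ H.normalCore) := rfl
      have h2 : ((e : G) : G ⧸ H.normalCore) = 1 := (QuotientGroup.eq_one_iff e).2 heN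
      rw [h1, h2, mul_one]
      rw [QuotientGroup.mk'_apply] at hpz
      exact hpz
    have hmemN : x'⁻¹ * z ∈ H.normalCore := (QuotientGroup.eq).1 hres
    have hLx' : Lf H x' = Lf H z :=
      (QuotientGroup.eq).2 (Subgroup.normalCore_le H hmemN)
    have hRx' : Rf H x' = Rf H z := by
      apply (QuotientGroup.eq).2
      have hc : x' * (x'⁻¹ * z)⁻¹ * x'⁻¹ ∈ H.normalCore :=
        Subgroup.Normal.conj_mem inferInstance _ (inv_mem hmemN) x'
      have he2 : (x'⁻¹)⁻¹ * z⁻¹ = x' * (x'⁻¹ * z)⁻¹ * x'⁻¹ := by group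
      rw [he2]
      exact Subgroup.normalCore_le H hc
    have hNE : NielsenEquiv S (x' ::ₘ V) := by
      rw [hSV, hx'def]
      exact ne_reach V hp e
    have hoV : o ∈ V := ho
    have hx'H : x' ∉ H := by
      intro hmem
      apply hzL
      rw [← hLx']
      have h1 : Lf H x' = Lf H o := by
        rw [(mem_H_iff_Lf H x').2 hmem, eq_comm, mem_H_iff_Lf]
        exact hoH
      rw [h1]
      exact Multiset.mem_map.2 ⟨o, hoV, rfl⟩
    have hfreshL : ∀ y ∈ V, Lf H x' ≠ Lf H y := by
      intro y hy heq
      apply hzL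
      rw [← hLx', heq]
      exact Multiset.mem_map.2 ⟨y, hy, rfl⟩
    have hfreshR : ∀ y ∈ V, Rf H x' ≠ Rf H y := by
      intro y hy heq
      apply hzR
      rw [← hRx', heq]
      exact Multiset.mem_map.2 ⟨y, hy, rfl⟩
    have hinvV : Inv1 H V := by
      intro α hα β hβ
      refine hinv α (Multiset.mem_of_mem_erase hα) β ?_
      have h6 : V.erase α ≤ S.erase α := by
        rw [hV, Multiset.erase_comm]
        exact Multiset.erase_le _ _
      exact Multiset.mem_of_le h6 hβ
    have hinvNew : Inv1 H (x' ::ₘ V) := by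
      intro α hα β hβ
      by_cases hax : α = x'
      · subst hax
        have hβV : β ∈ V := by rwa [Multiset.erase_cons_head] at hβ
        constructor
        · intro _ _
          exact ⟨hfreshL β hβV, hfreshR β hβV⟩
        · rintro ⟨k1, -, -, -⟩
          exact hx'H k1
      · have hαV : α ∈ V := by
          rcases Multiset.mem_cons.1 hα with h | h
          · exact absurd h hax
          · exact h
        have hβ' : β ∈ x' ::ₘ V.erase α := by
          rwa [Multiset.erase_cons_tail _ (fun h => hax h.symm)] at hβ
        rcases Multiset.mem_cons.1 hβ' with rfl | hβV
        · constructor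
          · intro _ _
            exact ⟨fun h => hfreshL α hαV h.symm, fun h => hfreshR α hαV h.symm⟩
          · rintro ⟨-, -, k3, -⟩
            exact hx'H k3
        · exact hinvV α hαV β hβV
    have hclos2 : Subgroup.closure {x : G | x ∈ (x' ::ₘ V)} = ⊤ := by
      rw [← nequiv_closure hNE]; exact hgen
    have hcard2 : (x' ::ₘ V).card ≤ H.index := by
      rw [nequiv_card hNE]
      exact hcard
    have hfil2 : ((x' ::ₘ V).filter (fun x => x ∈ H.normalCore)).card ≤ n - 1 := by
      have hxN : x' ∉ H.normalCore := fun hc => hx'H (Subgroup.normalCore_le H hc)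
      rw [Multiset.filter_cons_of_neg _ hxN]
      have hfe : (S.filter (fun x => x ∈ H.normalCore)).card
          = (V.filter (fun x => x ∈ H.normalCore)).card + 1 := by
        rw [hSV, Multiset.filter_cons_of_pos _ heN, Multiset.card_cons]
      show (Multiset.filter (fun x => x ∈ H.normalCore) V).card ≤ n - 1
      omega
    have hn1 : n - 1 < n := by
      have hpos : 1 ≤ (S.filter (fun x => x ∈ H.normalCore)).card := by
        rw [hSV, Multiset.filter_cons_of_pos _ heN, Multiset.card_cons]
        omega
      omega
    obtain ⟨S', hne', hL', hR'⟩ := IHn (n - 1) hn1 (x' ::ₘ V) hclos2 hcard2 hinvNew hfil2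
    exact ⟨S', hNE.trans hne', hL', hR'⟩

end St11

/-- for a group `G` with finite generating multiset `S` and a
finite-index subgroup `H` with `[G:H] ≥ |S|` such that `H / core_G(H)` is
cyclic, `S` is Nielsen equivalent to a multiset contained in a left-right
transversal of `H` in `G`. -/
theorem stmt11 {G : Type*} [Group G] (H : Subgroup G) [H.FiniteIndex]
    (hcyc : IsCyclic (↥H ⧸ (H.normalCore.subgroupOf H)))
    (S : Multiset G) (hgen : Subgroup.closure {x : G | x ∈ S} = ⊤)
    (hcard : S.card ≤ H.index) :
    ∃ S' : Multiset G, NielsenEquiv S S' ∧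
      ∃ T : Set G, IsLeftTransversal H T ∧ IsRightTransversal H T ∧ ∀ x ∈ S', x ∈ T := by
  classical
  obtain ⟨S1, hne1, hinv1⟩ := St11.phase1 H hcyc (St11.wsum H S) S le_rfl
  have hgen1 : Subgroup.closure {x : G | x ∈ S1} = ⊤ := by
    rw [← St11.nequiv_closure hne1]; exact hgen
  have hcard1 : S1.card ≤ H.index := by
    rw [St11.nequiv_card hne1]; exact hcard
  obtain ⟨S2, hne2, hL2, hR2⟩ :=
    St11.phase2 H ((S1.filter (fun x => x ∈ H.normalCore)).card) S1 hgen1 hcard1 hinv1 le_rfl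
  obtain ⟨pk, hpkL, hpkbij, hpkS⟩ := St11.transversal_package H S2 hL2 hR2
  refine ⟨S2, St11.NielsenEquiv.trans hne1 hne2, Set.range pk, ?_, ?_, ?_⟩
  · intro g
    refine ⟨pk ((g : G ⧸ H)), ⟨⟨_, rfl⟩, hpkL _⟩, ?_⟩
    rintro t ⟨⟨l, rfl⟩, hl⟩
    have hleq : l = ((g : G ⧸ H)) := by rw [← hpkL l]; exact hl
    rw [hleq]
  · intro g
    obtain ⟨l, hl⟩ := hpkbij.2 (St11.Rf H g)
    refine ⟨pk l, ⟨⟨l, rfl⟩, hl⟩, ?_⟩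
    rintro t ⟨⟨l', rfl⟩, hl'⟩
    have hleq : l' = l := hpkbij.1 (by rw [hl]; exact hl')
    rw [hleq]
  · intro x hx
    exact ⟨St11.Lf H x, hpkS x hx⟩
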